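/- Let n ≥ 1, l ≥ 0 with 2l ≤ n, and let S = {α ∈ ℤ^n : ∑_{i=1}^{l} α_{2i-1}·α_{2i} ≡ 0 (mod 2)}. Then the set Σ(S) of saturated elements of S equals Λ^{(2l)} = {α ∈ ℤ^n : α_i is even for all i ≤ 2l}. -/
import Mathlib


/-- The set of saturated elements of a subset `S` of an additive group. -/
def saturated {Λ : Type*} [AddCommGroup Λ] (S : Set Λ) : Set Λ :=
  {γ ∈ S | ∀ σ ∈ S, γ + σ ∈ S}

theorem stmt_14 (n l : ℕ) (hn : 1 ≤ n) (h2l : 2 * l ≤ n) :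
    saturated {α : Fin n → ℤ |
        Even (∑ i : Fin l,
          α ⟨2 * i.val, by have := i.isLt; omega⟩ *
          α ⟨2 * i.val + 1, by have := i.isLt; omega⟩)}
      = {α : Fin n → ℤ | ∀ i : Fin n, i.val < 2 * l → (2 : ℤ) ∣ α i} := by
  have ha : ∀ i : Fin l, 2 * i.val < n := fun i => by have := i.isLt; omega
  have hb : ∀ i : Fin l, 2 * i.val + 1 < n := fun i => by have := i.isLt; omega
  set a : Fin l → Fin n := fun i => ⟨2 * i.val, ha i⟩ with ha_def
  set b : Fin l → Fin n := fun i => ⟨2 * i.val + 1, hb i⟩ with hb_def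
  set Q : (Fin n → ℤ) → ℤ := fun α => ∑ i : Fin l, α (a i) * α (b i) with hQ
  have hset : {α : Fin n → ℤ |
        Even (∑ i : Fin l,
          α ⟨2 * i.val, by have := i.isLt; omega⟩ *
          α ⟨2 * i.val + 1, by have := i.isLt; omega⟩)} = {α | Even (Q α)} := rfl
  rw [hset]
  ext γ
  simp only [saturated, Set.mem_setOf_eq, Set.mem_sep_iff]
  constructor
  · rintro ⟨hγ, hsat⟩ i hi
    by_contra hodd
    rcases Nat.even_or_odd i.val with ⟨k, hk⟩ | ⟨k, hk⟩
    · have hkl : k < l := by omega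
      set k' : Fin l := ⟨k, hkl⟩ with hk'
      have hi_eq : i = a k' := by apply Fin.ext; simp [ha_def, hk']; omega
      set σ : Fin n → ℤ := Pi.single (b k') 1 with hσdef
      have hσa : ∀ i' : Fin l, σ (a i') = 0 := by
        intro i'
        apply Pi.single_eq_of_ne
        intro h
        have hv : (2 * i'.val : ℕ) = 2 * k'.val + 1 := congrArg Fin.val h
        omega
      have hσS : Even (Q σ) := by
        simp only [hQ]
        rw [Finset.sum_congr rfl (fun i' _ => by rw [hσa i', zero_mul])]
        simp
      have hsum : Q (γ + σ) = Q γ + γ (a k') := by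
        simp only [hQ, Pi.add_apply]
        have : ∀ i' ∈ Finset.univ, (γ (a i') + σ (a i')) * (γ (b i') + σ (b i'))
            = γ (a i') * γ (b i') + γ (a i') * σ (b i') := fun i' _ => by
          rw [hσa i']; ring
        rw [Finset.sum_congr rfl this, Finset.sum_add_distrib]
        congr 1
        rw [Finset.sum_eq_single k']
        · rw [hσdef, Pi.single_eq_same, mul_one]
        · intro i' _ hne
          rw [hσdef, Pi.single_eq_of_ne, mul_zero]
          intro h
          exact hne (Fin.ext (by have hv : (2 * i'.val + 1 : ℕ) = 2 * k'.val + 1 := congrArg Fin.val h; omega))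
        · simp
      have hev : Even (Q (γ + σ)) := hsat σ hσS
      rw [hsum] at hev
      have : Even (γ (a k')) := by
        rcases hγ with ⟨m, hm⟩; rcases hev with ⟨m', hm'⟩
        exact ⟨m' - m, by omega⟩
      rw [hi_eq] at hodd; exact hodd this.two_dvd
    · have hkl : k < l := by omega
      set k' : Fin l := ⟨k, hkl⟩ with hk'
      have hi_eq : i = b k' := by apply Fin.ext; simp [hb_def, hk']; omega
      set σ : Fin n → ℤ := Pi.single (a k') 1 with hσdef
      have hσb : ∀ i' : Fin l, σ (b i') = 0 := by
        intro i'
        apply Pi.single_eq_of_ne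
        intro h
        have hv : (2 * i'.val + 1 : ℕ) = 2 * k'.val := congrArg Fin.val h
        omega
      have hσS : Even (Q σ) := by
        simp only [hQ]
        rw [Finset.sum_congr rfl (fun i' _ => by rw [hσb i', mul_zero])]
        simp
      have hsum : Q (γ + σ) = Q γ + γ (b k') := by
        simp only [hQ, Pi.add_apply]
        have : ∀ i' ∈ Finset.univ, (γ (a i') + σ (a i')) * (γ (b i') + σ (b i'))
            = γ (a i') * γ (b i') + σ (a i') * γ (b i') := fun i' _ => by
          rw [hσb i']; ring
        rw [Finset.sum_congr rfl this, Finset.sum_add_distrib]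
        congr 1
        rw [Finset.sum_eq_single k']
        · rw [hσdef, Pi.single_eq_same, one_mul]
        · intro i' _ hne
          rw [hσdef, Pi.single_eq_of_ne, zero_mul]
          intro h
          exact hne (Fin.ext (by have hv : (2 * i'.val : ℕ) = 2 * k'.val := congrArg Fin.val h; omega))
        · simp
      have hev : Even (Q (γ + σ)) := hsat σ hσS
      rw [hsum] at hev
      have : Even (γ (b k')) := by
        rcases hγ with ⟨m, hm⟩; rcases hev with ⟨m', hm'⟩
        exact ⟨m' - m, by omega⟩
      rw [hi_eq] at hodd; exact hodd this.two_dvd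
  · intro h
    have heva : ∀ i : Fin l, Even (γ (a i)) := fun i => by
      rw [even_iff_two_dvd]
      exact h (a i) (by show (2 * i.val : ℕ) < 2 * l; have := i.isLt; omega)
    have hγS : Even (Q γ) := by
      rw [even_iff_two_dvd]
      exact Finset.dvd_sum fun i _ => ((heva i).two_dvd).mul_right _
    refine ⟨hγS, fun σ hσ => ?_⟩
    have hsum : Q (γ + σ) = Q γ + Q σ + ∑ i : Fin l, (γ (a i) * σ (b i) + σ (a i) * γ (b i)) := by
      simp only [hQ, Pi.add_apply, ← Finset.sum_add_distrib]
      exact Finset.sum_congr rfl fun i _ => by ring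
    rw [hsum]
    refine (hγS.add hσ).add ?_
    rw [even_iff_two_dvd]
    refine Finset.dvd_sum fun i _ => dvd_add (((heva i).two_dvd).mul_right _) ?_
    exact (h (b i) (by show (2 * i.val + 1 : ℕ) < 2 * l; have := i.isLt; omega)).mul_left _
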